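/- Define h(x,y) = (1/(x+y+1))·[x + x(x+1)/(2(x+y))] − ψ(x+y+1) + ψ(y+1). For every y > 0: if 1/√2 ≤ x < 1 then h(x,y) > 0, and if x > 1 then h(x,y) < 0. -/

import Mathlib

open Real Set Filter

noncomputable def psi (z : ℝ) : ℝ := deriv (fun t => Real.log (Real.Gamma t)) z

noncomputable def h (x y : ℝ) : ℝ :=
  (1 / (x + y + 1)) * (x + x * (x + 1) / (2 * (x + y))) - psi (x + y + 1) + psi (y + 1)

lemma hasDerivAt_logGamma {t : ℝ} (ht : 0 < t) :
    HasDerivAt (fun u => Real.log (Real.Gamma u)) (psi t) t := by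
  have h1 : DifferentiableAt ℝ Real.Gamma t :=
    Real.differentiableAt_Gamma (fun m => by
      have : (0:ℝ) ≤ m := Nat.cast_nonneg m
      intro hc; rw [hc] at ht; linarith)
  have hd : DifferentiableAt ℝ (fun u => Real.log (Real.Gamma u)) t :=
    h1.log (Real.Gamma_pos_of_pos ht).ne'
  exact hd.hasDerivAt

lemma psi_rec {t : ℝ} (ht : 0 < t) : psi (t + 1) = psi t + 1 / t := by
  have h1 : HasDerivAt (fun u : ℝ => Real.log (Real.Gamma (u + 1))) (psi (t + 1)) t := by
    have := (hasDerivAt_logGamma (by linarith : (0:ℝ) < t + 1))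
    exact this.comp_add_const t 1
  have h2 : HasDerivAt (fun u : ℝ => Real.log u + Real.log (Real.Gamma u)) (1 / t + psi t) t := by
    have := (Real.hasDerivAt_log ht.ne').add (hasDerivAt_logGamma ht)
    rw [one_div]; exact this
  have heq : (fun u : ℝ => Real.log (Real.Gamma (u + 1))) =ᶠ[nhds t]
      (fun u : ℝ => Real.log u + Real.log (Real.Gamma u)) := by
    filter_upwards [eventually_gt_nhds ht] with u hu
    rw [Real.Gamma_add_one hu.ne', Real.log_mul hu.ne' (Real.Gamma_pos_of_pos hu).ne']
  have h3 : HasDerivAt (fun u : ℝ => Real.log (Real.Gamma (u + 1))) (1 / t + psi t) t :=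
    h2.congr_of_eventuallyEq heq
  have := h1.unique h3
  linarith

lemma psi_le_log {z : ℝ} (hz : 0 < z) : psi z ≤ Real.log z := by
  have hd := Real.convexOn_log_Gamma.deriv_le_slope (Set.mem_Ioi.mpr hz)
    (Set.mem_Ioi.mpr (by linarith : (0:ℝ) < z + 1)) (by linarith)
    (by
      have h1 : DifferentiableAt ℝ Real.Gamma z :=
        Real.differentiableAt_Gamma (fun m => by
          have : (0:ℝ) ≤ m := Nat.cast_nonneg m
          intro hc; rw [hc] at hz; linarith)
      exact h1.log (Real.Gamma_pos_of_pos hz).ne')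
  have hslope : slope (Real.log ∘ Real.Gamma) z (z + 1) = Real.log z := by
    rw [slope_def_field]
    simp only [Function.comp_apply]
    rw [Real.Gamma_add_one hz.ne', Real.log_mul hz.ne' (Real.Gamma_pos_of_pos hz).ne']
    ring
  have hderiv : deriv (Real.log ∘ Real.Gamma) z = psi z := by
    apply Filter.EventuallyEq.deriv_eq
    filter_upwards with u
    rfl
  rw [hslope, hderiv] at hd
  exact hd

lemma log_le_psi {z : ℝ} (hz : 0 < z) : Real.log z ≤ psi (z + 1) := by
  have hd := Real.convexOn_log_Gamma.slope_le_deriv (Set.mem_Ioi.mpr hz)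
    (Set.mem_Ioi.mpr (by linarith : (0:ℝ) < z + 1)) (by linarith)
    (by
      have h1 : DifferentiableAt ℝ Real.Gamma (z+1) :=
        Real.differentiableAt_Gamma (fun m => by
          have : (0:ℝ) ≤ m := Nat.cast_nonneg m
          intro hc; nlinarith)
      exact h1.log (Real.Gamma_pos_of_pos (by linarith)).ne')
  have hslope : slope (Real.log ∘ Real.Gamma) z (z + 1) = Real.log z := by
    rw [slope_def_field]
    simp only [Function.comp_apply]
    rw [Real.Gamma_add_one hz.ne', Real.log_mul hz.ne' (Real.Gamma_pos_of_pos hz).ne']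
    ring
  have hderiv : deriv (Real.log ∘ Real.Gamma) (z+1) = psi (z+1) := by
    apply Filter.EventuallyEq.deriv_eq
    filter_upwards with u
    rfl
  rw [hslope, hderiv] at hd
  exact hd

noncomputable def DD (z : ℝ) : ℝ := psi z - Real.log z + 1 / (2 * z)

noncomputable def gg (t : ℝ) : ℝ :=
  t⁻¹ - Real.log (t + 1) + Real.log t - (2 * t * (t + 1))⁻¹

lemma gg_hasDerivAt {t : ℝ} (ht : 0 < t) :
    HasDerivAt gg (-(t ^ 2)⁻¹ - 1 / (t + 1) + t⁻¹ - -(2 * (t + 1) + 2 * t * 1) / (2 * t * (t + 1)) ^ 2) t := by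
  have ht1 : (0:ℝ) < t + 1 := by linarith
  have c1 : HasDerivAt (fun u : ℝ => u⁻¹) (-(t ^ 2)⁻¹) t := hasDerivAt_inv ht.ne'
  have c2 : HasDerivAt (fun u : ℝ => Real.log (u + 1)) (1 / (t + 1)) t := by
    have := ((hasDerivAt_id t).add_const 1).log ht1.ne'
    simpa using this
  have c3 : HasDerivAt Real.log t⁻¹ t := Real.hasDerivAt_log ht.ne'
  have c4 : HasDerivAt (fun u : ℝ => 2 * u * (u + 1)) (2 * (t + 1) + 2 * t * 1) t := by
    have h1 : HasDerivAt (fun u : ℝ => 2 * u) 2 t := by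
      simpa using (hasDerivAt_id t).const_mul (2:ℝ)
    have h2 : HasDerivAt (fun u : ℝ => u + 1) 1 t := (hasDerivAt_id t).add_const 1
    exact h1.mul h2
  have c5 : HasDerivAt (fun u : ℝ => (2 * u * (u + 1))⁻¹)
      (-(2 * (t + 1) + 2 * t * 1) / (2 * t * (t + 1)) ^ 2) t := by
    exact c4.inv (by positivity)
  exact ((c1.sub c2).add c3).sub c5

lemma gg_strictAntiOn : StrictAntiOn gg (Ioi (0:ℝ)) := by
  apply strictAntiOn_of_deriv_neg (convex_Ioi 0)
  · intro t ht
    have ht0 : (0:ℝ) < t := ht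
    exact ((gg_hasDerivAt ht0).differentiableAt).continuousAt.continuousWithinAt
  · intro t ht
    rw [interior_Ioi] at ht
    have ht0 : (0:ℝ) < t := ht
    rw [(gg_hasDerivAt ht0).deriv]
    have h1 : (-(t ^ 2)⁻¹ - 1 / (t + 1) + t⁻¹ - -(2 * (t + 1) + 2 * t * 1) / (2 * t * (t + 1)) ^ 2)
        = -(1 / (2 * t ^ 2 * (t + 1) ^ 2)) := by
      have ht1 : (0:ℝ) < t + 1 := by linarith
      have h2 : t ≠ 0 := ht0.ne'
      have h3 : t + 1 ≠ 0 := ht1.ne'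
      field_simp
      ring
    rw [h1]
    have : (0:ℝ) < 1 / (2 * t ^ 2 * (t + 1) ^ 2) := by positivity
    linarith

lemma DD_step {t : ℝ} (ht : 0 < t) : DD (t + 1) = DD t + gg t := by
  unfold DD gg
  rw [psi_rec ht]
  have ht1 : (0:ℝ) < t + 1 := by linarith
  have h : 1 / (2 * (t + 1)) - 1 / (2 * t) = t⁻¹ - 1/t - (2 * t * (t + 1))⁻¹ := by
    field_simp
    ring
  field_simp
  ring

lemma DD_add_nat {t : ℝ} (ht : 0 < t) (n : ℕ) :
    DD (t + n) = DD t + ∑ k ∈ Finset.range n, gg (t + k) := by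
  induction n with
  | zero => simp
  | succ n ih =>
    have h1 : t + (n + 1 : ℕ) = (t + n) + 1 := by push_cast; ring
    rw [h1, DD_step (by positivity), ih, Finset.sum_range_succ]
    ring

lemma DD_tendsto {t : ℝ} (ht : 0 < t) :
    Tendsto (fun n : ℕ => DD (t + n)) atTop (nhds 0) := by
  have hbound : Tendsto (fun n : ℕ => 1 / (t + n - 1)) atTop (nhds 0) := by
    have h1 : Tendsto (fun n : ℕ => t + (n:ℝ) - 1) atTop atTop := by
      have h0 := tendsto_natCast_atTop_atTop (R := ℝ)
      have h2 := tendsto_atTop_add_const_right atTop (t - 1) h0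
      have h3 : (fun n : ℕ => t + (n:ℝ) - 1) = fun n : ℕ => (n:ℝ) + (t - 1) := by
        funext n; ring
      rw [h3]; exact h2
    simp only [one_div]; exact h1.inv_tendsto_atTop
  apply tendsto_of_tendsto_of_tendsto_of_le_of_le' (by simpa using hbound.neg) hbound
  · filter_upwards [eventually_ge_atTop 1] with n hn
    have hn1 : (1:ℝ) ≤ (n:ℝ) := by exact_mod_cast hn
    have hz : (1:ℝ) < t + n := by linarith
    have hz0 : (0:ℝ) < t + n := by linarith
    have hz1 : (0:ℝ) < t + n - 1 := by linarith
    -- DD (t+n) ≥ log (t+n-1) - log (t+n) + 1/(2(t+n)) ≥ -(1/(t+n-1))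
    have hpsi : Real.log (t + n - 1) ≤ psi (t + n) := by
      have := log_le_psi hz1
      have he : t + n - 1 + 1 = t + n := by ring
      rwa [he] at this
    have hlog : Real.log (t + n) - Real.log (t + n - 1) ≤ 1 / (t + n - 1) := by
      have h2 : Real.log (t + n) - Real.log (t + n - 1) = Real.log ((t + n) / (t + n - 1)) := by
        rw [Real.log_div hz0.ne' hz1.ne']
      rw [h2]
      have h3 := Real.log_le_sub_one_of_pos (show (0:ℝ) < (t + n) / (t + n - 1) by positivity)
      have h4 : (t + n) / (t + n - 1) - 1 = 1 / (t + n - 1) := by field_simp; ring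
      linarith
    have hhalf : (0:ℝ) < 1 / (2 * (t + n)) := by positivity
    have h5 : (t + (n:ℝ) - 1)⁻¹ = 1 / (t + n - 1) := (one_div _).symm
    unfold DD
    linarith [h5]
  · filter_upwards [eventually_ge_atTop 1] with n hn
    have hn1 : (1:ℝ) ≤ (n:ℝ) := by exact_mod_cast hn
    have hz0 : (0:ℝ) < t + n := by linarith
    have h1 := psi_le_log hz0
    have h2 : 1 / (2 * (t + n)) ≤ 1 / (t + n - 1) := by
      apply div_le_div_of_nonneg_left (by norm_num) (by linarith) (by linarith)
    unfold DD
    linarith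

lemma DD_lt {a b : ℝ} (ha : 0 < a) (hab : a < b) : DD a < DD b := by
  have hb : 0 < b := lt_trans ha hab
  have key : ∀ n : ℕ, 1 ≤ n → gg a - gg b + (DD (b + n) - DD (a + n)) ≤ DD b - DD a := by
    intro n hn
    have hA := DD_add_nat ha n
    have hB := DD_add_nat hb n
    have hsum : gg a - gg b ≤ ∑ k ∈ Finset.range n, (gg (a + k) - gg (b + k)) := by
      have h0 : (0:ℕ) ∈ Finset.range n := Finset.mem_range.mpr hn
      have hterm : ∀ k ∈ Finset.range n, 0 ≤ gg (a + k) - gg (b + k) := by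
        intro k _
        have hk : (0:ℝ) ≤ k := Nat.cast_nonneg k
        have := gg_strictAntiOn (Set.mem_Ioi.mpr (by linarith : (0:ℝ) < a + k))
          (Set.mem_Ioi.mpr (by linarith : (0:ℝ) < b + k)) (by linarith)
        linarith
      have := Finset.single_le_sum hterm h0
      simpa using this
    have hsplit : ∑ k ∈ Finset.range n, (gg (a + k) - gg (b + k)) =
        (∑ k ∈ Finset.range n, gg (a + k)) - ∑ k ∈ Finset.range n, gg (b + k) :=
      Finset.sum_sub_distrib _ _
    rw [hsplit] at hsum
    linarith
  have hlim : Tendsto (fun n : ℕ => gg a - gg b + (DD (b + n) - DD (a + n))) atTop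
      (nhds (gg a - gg b)) := by
    have := (DD_tendsto hb).sub (DD_tendsto ha)
    have h2 := tendsto_const_nhds (x := gg a - gg b) (f := atTop (α := ℕ)) |>.add this
    simpa using h2
  have hle : gg a - gg b ≤ DD b - DD a := by
    apply le_of_tendsto hlim
    filter_upwards [eventually_ge_atTop 1] with n hn
    exact key n hn
  have hgg : gg b < gg a := gg_strictAntiOn (Set.mem_Ioi.mpr ha) (Set.mem_Ioi.mpr hb) hab
  linarith

noncomputable def Phi (y x : ℝ) : ℝ :=
  (1 / (x + y + 1)) * (x + x * (x + 1) / (2 * (x + y))) - Real.log (x + y + 1) +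
    1 / (2 * (x + y + 1))

lemma Phi_hasDerivAt {y x : ℝ} (hy : 0 < y) (hx : 0 < x) :
    HasDerivAt (Phi y)
      (-((4 * x ^ 3 + 2 * x ^ 2 + (4 * x ^ 2 - 2) * y) / (4 * (x + y) ^ 2 * (x + y + 1) ^ 2))) x := by
  have hxy : (0:ℝ) < x + y := by linarith
  have hxy1 : (0:ℝ) < x + y + 1 := by linarith
  have hlin : HasDerivAt (fun u : ℝ => u + y + 1) 1 x := by
    simpa using ((hasDerivAt_id x).add_const y).add_const 1
  have hu1 : HasDerivAt (fun u : ℝ => 1 / (u + y + 1))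
      ((0 * (x + y + 1) - 1 * 1) / (x + y + 1) ^ 2) x :=
    (hasDerivAt_const x 1).div hlin hxy1.ne'
  have hnum : HasDerivAt (fun u : ℝ => u * (u + 1)) (1 * (x + 1) + x * 1) x :=
    (hasDerivAt_id x).mul ((hasDerivAt_id x).add_const 1)
  have hden : HasDerivAt (fun u : ℝ => 2 * (u + y)) (2 * 1) x :=
    ((hasDerivAt_id x).add_const y).const_mul 2
  have hv : HasDerivAt (fun u : ℝ => u + u * (u + 1) / (2 * (u + y)))
      (1 + ((1 * (x + 1) + x * 1) * (2 * (x + y)) - x * (x + 1) * (2 * 1)) / (2 * (x + y)) ^ 2) x :=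
    (hasDerivAt_id x).add (hnum.div hden (by positivity))
  have hprod := hu1.mul hv
  have hlog : HasDerivAt (fun u : ℝ => Real.log (u + y + 1)) (1 / (x + y + 1)) x := by
    simpa using hlin.log hxy1.ne'
  have hlast : HasDerivAt (fun u : ℝ => 1 / (2 * (u + y + 1)))
      ((0 * (2 * (x + y + 1)) - 1 * (2 * 1)) / (2 * (x + y + 1)) ^ 2) x :=
    (hasDerivAt_const x 1).div (hlin.const_mul 2) (by positivity)
  have htot := (hprod.sub hlog).add hlast
  refine htot.congr_deriv ?_
  field_simp
  ring

lemma sqrt2_facts : (0:ℝ) < 1 / Real.sqrt 2 ∧ (1 / Real.sqrt 2 : ℝ) ≤ 1 ∧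
    ((1 / Real.sqrt 2 : ℝ)) ^ 2 = 1 / 2 := by
  have h2 : (0:ℝ) < Real.sqrt 2 := Real.sqrt_pos.mpr (by norm_num)
  have h1 : (1:ℝ) ≤ Real.sqrt 2 := by
    have := Real.sqrt_le_sqrt (show (1:ℝ) ≤ 2 by norm_num)
    rwa [Real.sqrt_one] at this
  refine ⟨by positivity, (div_le_one h2).mpr h1, ?_⟩
  rw [div_pow, one_pow, Real.sq_sqrt (by norm_num : (0:ℝ) ≤ 2)]

lemma Phi_anti {y : ℝ} (hy : 0 < y) : AntitoneOn (Phi y) (Ici (1 / Real.sqrt 2)) := by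
  obtain ⟨hc0, hc1, hc2⟩ := sqrt2_facts
  apply antitoneOn_of_deriv_nonpos (convex_Ici _)
  · intro x hx
    have hx0 : (0:ℝ) < x := lt_of_lt_of_le hc0 hx
    exact (Phi_hasDerivAt hy hx0).differentiableAt.continuousAt.continuousWithinAt
  · rw [interior_Ici]
    intro x hx
    have hx0 : (0:ℝ) < x := lt_trans hc0 hx
    exact (Phi_hasDerivAt hy hx0).differentiableAt.differentiableWithinAt
  · rw [interior_Ici]
    intro x hx
    have hx0 : (0:ℝ) < x := lt_trans hc0 hx
    rw [(Phi_hasDerivAt hy hx0).deriv]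
    have hxsq : 1 / 2 ≤ x ^ 2 := by
      rw [← hc2]
      exact pow_le_pow_left₀ hc0.le hx.le 2
    have hnum : 0 ≤ 4 * x ^ 3 + 2 * x ^ 2 + (4 * x ^ 2 - 2) * y := by nlinarith
    have hden : (0:ℝ) < 4 * (x + y) ^ 2 * (x + y + 1) ^ 2 := by positivity
    have := div_nonneg hnum hden.le
    linarith

theorem stmt_6 (y : ℝ) (hy : 0 < y) :
    (∀ x : ℝ, 1 / Real.sqrt 2 ≤ x → x < 1 → 0 < h x y) ∧
    (∀ x : ℝ, 1 < x → h x y < 0) := by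
  obtain ⟨hc0, hc1, hc2⟩ := sqrt2_facts
  have hrec : psi (y + 2) = psi (y + 1) + 1 / (y + 1) := by
    have := psi_rec (show (0:ℝ) < y + 1 by linarith)
    rwa [show y + 1 + 1 = y + 2 by ring] at this
  constructor
  · intro x hx1 hx2
    have hx0 : (0:ℝ) < x := lt_of_lt_of_le hc0 hx1
    have hD : DD (x + y + 1) < DD (y + 2) := DD_lt (by linarith) (by linarith)
    unfold DD at hD
    have hPhi : Phi y 1 ≤ Phi y x := Phi_anti hy (mem_Ici.mpr hx1) (mem_Ici.mpr hc1) hx2.le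
    unfold Phi at hPhi
    have hR1 : (1 / (1 + y + 1)) * (1 + 1 * (1 + 1) / (2 * (1 + y))) = 1 / (y + 1) := by
      field_simp
      ring
    unfold h
    rw [hR1] at hPhi
    rw [show (1:ℝ) + y + 1 = y + 2 by ring] at hPhi
    linarith
  · intro x hx1
    have hx0 : (0:ℝ) < x := by linarith
    have hD : DD (y + 2) < DD (x + y + 1) := DD_lt (by linarith) (by linarith)
    unfold DD at hD
    have hPhi : Phi y x ≤ Phi y 1 := Phi_anti hy (mem_Ici.mpr hc1)
      (mem_Ici.mpr (by linarith)) hx1.le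
    unfold Phi at hPhi
    have hR1 : (1 / (1 + y + 1)) * (1 + 1 * (1 + 1) / (2 * (1 + y))) = 1 / (y + 1) := by
      field_simp
      ring
    unfold h
    rw [hR1] at hPhi
    rw [show (1:ℝ) + y + 1 = y + 2 by ring] at hPhi
    linarith
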